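/- With the boundary condition (a+b) sin φ(L) + 2a c_o r(L) = 0 along a non-geodesic boundary circle of radius r(L) = √(α/β) of an axially symmetric critical disc, the energy parameters must satisfy c_o² < (a+b)²β/(4a²α). Consequently (nonexistence): if c_o ≠ 0 and a = −b > 0, there is no axially symmetric disc critical for E satisfying a(H+c_o)² + bK ≡ 0 along its boundary. -/

import Mathlib

/-- With the boundary condition (a+b)sin φ(L) + 2a c_o r(L) = 0 along a
non-geodesic (|sin φ(L)| < 1) boundary circle of radius r(L) = √(α/β), the parameters
must satisfy c_o² < (a+b)²β/(4a²α). Consequently, if c_o ≠ 0 and a = −b > 0, there is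
no axially symmetric critical disc satisfying a(H+c_o)² + bK ≡ 0 along the boundary
(i.e. satisfying this boundary condition). -/
theorem stmt_9 (a b c_o α β r φL : ℝ)
    (ha : 0 < a) (hα : 0 < α) (hβ : 0 < β) (hr : 0 < r) (hc : c_o ≠ 0)
    (hbc : (a + b) * Real.sin φL + 2 * a * c_o * r = 0) :
    (|Real.sin φL| < 1 → r = Real.sqrt (α / β) →
        c_o ^ 2 < (a + b) ^ 2 * β / (4 * a ^ 2 * α)) ∧
      (a = -b → False) := by
  constructor
  · intro hs hrr
    have hab : a + b ≠ 0 := by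
      intro h
      apply hc
      have : 2 * a * c_o * r = 0 := by rw [h] at hbc; linarith
      have := mul_eq_zero.mp this
      rcases this with h1 | h1
      · rcases mul_eq_zero.mp h1 with h2 | h2
        · rcases mul_eq_zero.mp h2 with h3 | h3
          · norm_num at h3
          · exact absurd h3 (ne_of_gt ha)
        · exact h2
      · exact absurd h1 (ne_of_gt hr)
    have hr2 : r ^ 2 = α / β := by
      rw [hrr, Real.sq_sqrt (le_of_lt (div_pos hα hβ))]
    -- c_o = -(a+b) sin / (2 a r)
    have key : (2 * a * r) ^ 2 * c_o ^ 2 = (a + b) ^ 2 * Real.sin φL ^ 2 := by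
      have h0 : (a + b) * Real.sin φL = -(2 * a * c_o * r) := by linarith
      have h1 := congrArg (· ^ 2) h0
      nlinarith [h1]
    have hsin : Real.sin φL ^ 2 < 1 := by
      have := abs_lt.mp hs
      nlinarith [this.1, this.2]
    have h1 : (a + b) ^ 2 * Real.sin φL ^ 2 < (a + b) ^ 2 := by
      have hp : 0 < (a + b) ^ 2 := by positivity
      nlinarith [hp]
    have h2 : (2 * a * r) ^ 2 * c_o ^ 2 < (a + b) ^ 2 := key ▸ h1
    have hr2' : β * r ^ 2 = α := by
      rw [hr2]; field_simp
    have hpos : 0 < 4 * a ^ 2 * α := by positivity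
    rw [lt_div_iff₀ hpos]
    nlinarith [h2, sq_nonneg c_o, mul_pos hβ (pow_pos hr 2)]
  · intro h
    apply hc
    rw [h] at hbc
    have : 2 * (-b) * c_o * r = 0 := by linarith
    have hb : (-b) ≠ 0 := by rw [← h]; exact ne_of_gt ha
    have := mul_eq_zero.mp this
    rcases this with h1 | h1
    · rcases mul_eq_zero.mp h1 with h2 | h2
      · rcases mul_eq_zero.mp h2 with h3 | h3
        · norm_num at h3
        · exact absurd h3 hb
      · exact h2
    · exact absurd h1 (ne_of_gt hr)
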